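/- Let △x̃¹x̃²x̃³ be a triangle in ℝ², and p̃², p̃³ points with ‖p̃³ − x̃¹‖ = ‖p̃² − x̃¹‖, such that p̃³ lies on the same side of line x̃¹x̃² as x̃³, and p̃² lies on the same side of line x̃³x̃¹ as x̃². Let ẋ² be the image of x̃² under the rotation about x̃¹ taking the ray x̃¹p̃³ to the ray x̃¹p̃². Then the triangles △p̃³x̃¹x̃² and △p̃²x̃³x̃¹ have disjoint convex hulls except for the common point x̃¹ if and only if ‖ẋ² − x̃³‖ < ‖x̃² − x̃³‖. -/

import Mathlib

open Set Metric Real Complex EuclideanGeometry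

section Helpers

open InnerProductGeometry

private lemma key_identity (a b d : ℂ) :
    Complex.normSq d * ((starRingEnd ℂ) a * b).im =
      ((starRingEnd ℂ) d * a).re * ((starRingEnd ℂ) d * b).im -
        ((starRingEnd ℂ) d * a).im * ((starRingEnd ℂ) d * b).re := by
  simp only [Complex.normSq_apply, Complex.mul_re, Complex.mul_im, Complex.conj_re,
    Complex.conj_im]
  ring

private lemma seg_dir {a b d : ℂ} (hd : d ≠ 0)
    (hA : ((starRingEnd ℂ) d * a).im ≤ 0) (hB : 0 ≤ ((starRingEnd ℂ) d * b).im)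
    (hP : 0 < ((starRingEnd ℂ) a * b).im) :
    ∃ c : ℝ, 0 < c ∧ c • d ∈ segment ℝ a b := by
  set A := ((starRingEnd ℂ) d * a).im with hAdef
  set B := ((starRingEnd ℂ) d * b).im with hBdef
  have hnsq : 0 < Complex.normSq d := Complex.normSq_pos.2 hd
  have hid := key_identity a b d
  rw [← hAdef, ← hBdef] at hid
  have hD : 0 < B - A := by
    rcases lt_or_eq_of_le hA with h | h
    · linarith
    rcases lt_or_eq_of_le hB with h' | h'
    · linarith
    · exfalso
      rw [h, ← h'] at hid
      simp only [mul_zero, zero_mul, sub_zero, zero_sub] at hid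
      nlinarith [mul_pos hnsq hP]
  set t := B / (B - A) with htdef
  have ht0 : 0 ≤ t := div_nonneg hB hD.le
  have ht1 : t ≤ 1 := by rw [div_le_one hD]; linarith
  set w := t • a + (1 - t) • b with hwdef
  have hexp : (starRingEnd ℂ) d * w =
      t • ((starRingEnd ℂ) d * a) + (1 - t) • ((starRingEnd ℂ) d * b) := by
    rw [hwdef, mul_add, mul_smul_comm, mul_smul_comm]
  have hBA : B - A ≠ 0 := ne_of_gt hD
  have him : ((starRingEnd ℂ) d * w).im = 0 := by
    rw [hexp]
    simp only [Complex.add_im, Complex.smul_im, ← hAdef, ← hBdef]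
    rw [htdef]
    field_simp
    ring
  have hre' : (B - A) * ((starRingEnd ℂ) d * w).re =
      Complex.normSq d * ((starRingEnd ℂ) a * b).im := by
    rw [hexp]
    simp only [Complex.add_re, Complex.smul_re]
    rw [hid, htdef]
    have hk : (B - A) * (B / (B - A)) = B := by field_simp
    simp only [smul_eq_mul]
    rw [mul_add, ← mul_assoc, ← mul_assoc, mul_sub, mul_one, hk]
    ring
  have hre : 0 < ((starRingEnd ℂ) d * w).re := by
    nlinarith [mul_pos hnsq hP]
  set ρ := ((starRingEnd ℂ) d * w).re with hρdef
  have hdw : (starRingEnd ℂ) d * w = (ρ : ℂ) := by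
    apply Complex.ext
    · simp [hρdef]
    · simp [him]
  refine ⟨ρ / Complex.normSq d, div_pos hre hnsq, ?_⟩
  have hw : (ρ / Complex.normSq d) • d = w := by
    apply mul_left_cancel₀ (show (starRingEnd ℂ) d ≠ 0 by simpa using hd)
    rw [hdw, mul_smul_comm]
    rw [show (starRingEnd ℂ) d * d = (Complex.normSq d : ℂ) by
      rw [mul_comm, Complex.mul_conj]]
    rw [Complex.real_smul]
    push_cast
    have : (Complex.normSq d : ℂ) ≠ 0 := by
      exact_mod_cast ne_of_gt hnsq
    field_simp
  rw [hw]
  exact ⟨t, 1 - t, ht0, by linarith, by ring, rfl⟩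

private lemma polar_mul (r s x y : ℝ) :
    (starRingEnd ℂ) ((r : ℂ) * Complex.exp ((x : ℂ) * Complex.I)) *
      ((s : ℂ) * Complex.exp ((y : ℂ) * Complex.I)) =
      ((r * s : ℝ) : ℂ) * Complex.exp (((y - x : ℝ) : ℂ) * Complex.I) := by
  rw [map_mul, ← Complex.exp_conj]
  have h1 : (starRingEnd ℂ) ((x : ℂ) * Complex.I) = -((x : ℂ) * Complex.I) := by
    simp [Complex.conj_ofReal]
  rw [h1, Complex.conj_ofReal, mul_mul_mul_comm, ← Complex.exp_add]
  push_cast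
  ring_nf

private lemma polar_im (c θ : ℝ) :
    (((c : ℝ) : ℂ) * Complex.exp (((θ : ℝ) : ℂ) * Complex.I)).im = c * Real.sin θ := by
  simp [Complex.mul_im, Complex.exp_ofReal_mul_I_im]

private lemma polar_re (c θ : ℝ) :
    (((c : ℝ) : ℂ) * Complex.exp (((θ : ℝ) : ℂ) * Complex.I)).re = c * Real.cos θ := by
  simp [Complex.mul_re, Complex.exp_ofReal_mul_I_re]

private lemma sin_pos_param {x : ℝ} (h1 : -π < x) (h2 : x < 2 * π)
    (h : 0 < Real.sin x) : 0 < x ∧ x < π := by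
  constructor
  · by_contra hx
    push_neg at hx
    have hn : 0 ≤ Real.sin (-x) :=
      Real.sin_nonneg_of_nonneg_of_le_pi (by linarith) (by linarith)
    rw [Real.sin_neg] at hn
    linarith
  · by_contra hx
    push_neg at hx
    have hn : 0 ≤ Real.sin (x - π) :=
      Real.sin_nonneg_of_nonneg_of_le_pi (by linarith) (by linarith)
    rw [Real.sin_sub_pi] at hn
    linarith

private lemma div_im' (a u : ℂ) :
    (a / u).im = ((starRingEnd ℂ) u * a).im / Complex.normSq u := by
  rw [Complex.div_im, Complex.mul_im, Complex.conj_re, Complex.conj_im]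
  ring

private lemma angle_conj' (a b : ℂ) (ha : a ≠ 0) (hb : b ≠ 0) :
    InnerProductGeometry.angle ((starRingEnd ℂ) a) ((starRingEnd ℂ) b) =
      InnerProductGeometry.angle a b := by
  rw [Complex.angle_eq_abs_arg (by simpa using ha) (by simpa using hb),
    Complex.angle_eq_abs_arg ha hb, ← map_div₀, Complex.arg_conj]
  split_ifs with h
  · rw [h]
  · rw [abs_neg]

private lemma hull_inter_image (f : ℂ →ᵃ[ℝ] ℂ) (hf : Function.Injective f)
    (s t : Set ℂ) (z w : ℂ) (hw : f z = w) :
    (convexHull ℝ (f '' s) ∩ convexHull ℝ (f '' t) = {w}) ↔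
      (convexHull ℝ s ∩ convexHull ℝ t = {z}) := by
  subst hw
  rw [← AffineMap.image_convexHull, ← AffineMap.image_convexHull, ← Set.image_inter hf,
    ← Set.image_singleton, Set.image_eq_image hf]

end Helpers

section Aux

open InnerProductGeometry

set_option maxHeartbeats 1000000 in
private lemma aux (v q2 q3 : ℂ) (hq3 : q3 ≠ 0) (hq2 : q2 ≠ 0) (hv : v ≠ 0)
    (hlen : ‖q3‖ = ‖q2‖)
    (hγ : 0 < v.im) (hα : 0 < q3.im)
    (hβ : 0 < ((starRingEnd ℂ) q2 * v).im)
    (hangle : InnerProductGeometry.angle 1 q3 + InnerProductGeometry.angle q2 v < π) :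
    ((convexHull ℝ ({q3, 0, 1} : Set ℂ)) ∩ (convexHull ℝ ({q2, v, 0} : Set ℂ)) = {0}) ↔
      ‖q2 / q3 - v‖ < ‖1 - v‖ := by
  set α := q3.arg with hαdef
  set θ := q2.arg with hθdef
  set γ := v.arg with hγdef
  set R := ‖q3‖ with hRdef
  set ρ := ‖v‖ with hρdef
  have hR0 : 0 < R := norm_pos_iff.mpr hq3
  have hρ0 : 0 < ρ := norm_pos_iff.mpr hv
  have eq3 : q3 = (R : ℂ) * Complex.exp ((α : ℂ) * Complex.I) :=
    (Complex.norm_mul_exp_arg_mul_I q3).symm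
  have eq2 : q2 = (R : ℂ) * Complex.exp ((θ : ℂ) * Complex.I) := by
    rw [hlen]; exact (Complex.norm_mul_exp_arg_mul_I q2).symm
  have ev : v = (ρ : ℂ) * Complex.exp ((γ : ℂ) * Complex.I) :=
    (Complex.norm_mul_exp_arg_mul_I v).symm
  have hα0 : 0 < α := by
    rcases (Complex.arg_nonneg_iff.2 hα.le).lt_or_eq with h | h
    · exact h
    · exfalso
      have h2 := (Complex.arg_eq_zero_iff.1 h.symm).2
      rw [h2] at hα; exact lt_irrefl 0 hα
  have hαπ : α < π := Complex.arg_lt_pi_iff.2 (Or.inr (ne_of_gt hα))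
  have hγ0 : 0 < γ := by
    rcases (Complex.arg_nonneg_iff.2 hγ.le).lt_or_eq with h | h
    · exact h
    · exfalso
      have h2 := (Complex.arg_eq_zero_iff.1 h.symm).2
      rw [h2] at hγ; exact lt_irrefl 0 hγ
  have hγπ : γ < π := Complex.arg_lt_pi_iff.2 (Or.inr (ne_of_gt hγ))
  have hθπ : θ ≤ π := Complex.arg_le_pi q2
  have hθn : -π < θ := Complex.neg_pi_lt_arg q2
  have hβprod : ((starRingEnd ℂ) q2 * v).im = R * ρ * Real.sin (γ - θ) := by
    conv_lhs => rw [eq2, ev]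
    rw [polar_mul, polar_im]
  have hsinβ : 0 < Real.sin (γ - θ) := by
    rw [hβprod] at hβ
    by_contra hcon
    push_neg at hcon
    nlinarith [mul_pos hR0 hρ0]
  obtain ⟨hβ0, hβπ⟩ := sin_pos_param (by linarith) (by linarith) hsinβ
  -- the angle hypothesis in terms of arguments
  have hang : α + (γ - θ) < π := by
    have h1 : InnerProductGeometry.angle 1 q3 = α := by
      rw [Complex.angle_one_left hq3, ← hαdef]
      exact abs_of_pos hα0
    have h2 : InnerProductGeometry.angle q2 v = γ - θ := by
      rw [Complex.angle_eq_abs_arg hq2 hv]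
      have hq2v : q2 / v = ((R / ρ : ℝ) : ℂ) * Complex.exp (((θ - γ : ℝ) : ℂ) * Complex.I) := by
        rw [eq2, ev, mul_div_mul_comm, ← Complex.exp_sub]
        push_cast
        ring_nf
      rw [hq2v, Complex.arg_real_mul _ (div_pos hR0 hρ0), Complex.exp_mul_I,
        Complex.arg_cos_add_sin_mul_I ⟨by linarith, by linarith⟩]
      rw [abs_of_neg (by linarith)]
      ring
    rw [h1, h2] at hangle
    linarith
  -- reduce the right-hand side to a comparison of arguments
  have hRHS : (‖q2 / q3 - v‖ < ‖1 - v‖) ↔ α < θ := by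
    have e1 : q2 / q3 = ((1 : ℝ) : ℂ) * Complex.exp (((θ - α : ℝ) : ℂ) * Complex.I) := by
      rw [eq2, eq3, mul_div_mul_comm, ← Complex.exp_sub]
      have : (R : ℂ) / (R : ℂ) = 1 := by
        rw [div_self]; exact_mod_cast ne_of_gt hR0
      rw [this]
      push_cast
      ring_nf
    have e2 : (1 : ℂ) - v = ((1 : ℝ) : ℂ) * Complex.exp (((0 : ℝ) : ℂ) * Complex.I) -
        (ρ : ℂ) * Complex.exp ((γ : ℂ) * Complex.I) := by
      rw [← ev]; simp
    have nsub : ∀ r s x y : ℝ, Complex.normSq ((r : ℂ) * Complex.exp ((x : ℂ) * Complex.I) -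
        (s : ℂ) * Complex.exp ((y : ℂ) * Complex.I)) = r ^ 2 + s ^ 2 -
          2 * r * s * Real.cos (y - x) := by
      intro r s x y
      rw [Complex.normSq_sub]
      have h1 : ∀ c x' : ℝ, Complex.normSq ((c : ℂ) * Complex.exp ((x' : ℂ) * Complex.I)) =
          c ^ 2 := by
        intro c x'
        rw [Complex.normSq_mul, show Complex.normSq (Complex.exp ((x' : ℂ) * Complex.I)) = 1 by
          rw [Complex.normSq_eq_norm_sq, Complex.norm_exp_ofReal_mul_I]; norm_num]
        simp [Complex.normSq_ofReal, sq]
      rw [h1, h1]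
      have h2 : ((r : ℂ) * Complex.exp ((x : ℂ) * Complex.I) *
          (starRingEnd ℂ) ((s : ℂ) * Complex.exp ((y : ℂ) * Complex.I))).re
          = r * s * Real.cos (y - x) := by
        rw [mul_comm, polar_mul, polar_re, show x - y = -(y - x) by ring, Real.cos_neg]
        ring
      rw [h2]
      ring
    have habs : ∀ z w : ℂ, ‖z‖ < ‖w‖ ↔
        Complex.normSq z < Complex.normSq w := by
      intro z w
      rw [← Complex.sq_norm, ← Complex.sq_norm]
      constructor
      · intro h
        have := norm_nonneg z
        nlinarith
      · intro h
        by_contra hcon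
        push_neg at hcon
        have := norm_nonneg w
        nlinarith
    rw [habs]
    have hl : Complex.normSq (q2 / q3 - v) = 1 ^ 2 + ρ ^ 2 -
        2 * 1 * ρ * Real.cos (γ - (θ - α)) := by
      conv_lhs => rw [e1, ev]
      exact nsub 1 ρ (θ - α) γ
    have hr : Complex.normSq (1 - v) = 1 ^ 2 + ρ ^ 2 - 2 * 1 * ρ * Real.cos (γ - 0) := by
      conv_lhs => rw [e2]
      exact nsub 1 ρ 0 γ
    have key : Real.cos γ < Real.cos (γ - (θ - α)) ↔ α < θ := by
      have h1 : γ - (θ - α) = α + (γ - θ) := by ring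
      rw [h1, Real.strictAntiOn_cos.lt_iff_gt
        (Set.mem_Icc.mpr ⟨by linarith, by linarith⟩)
        (Set.mem_Icc.mpr ⟨by linarith, by linarith⟩)]
      constructor <;> intro <;> linarith
    have harith : ∀ c1 c2 : ℝ, ((1 : ℝ) ^ 2 + ρ ^ 2 - 2 * 1 * ρ * c1 <
        1 ^ 2 + ρ ^ 2 - 2 * 1 * ρ * c2) ↔ c2 < c1 := by
      intro c1 c2
      constructor
      · intro h
        nlinarith [hρ0]
      · intro h
        nlinarith [hρ0]
    rw [hl, hr, harith, sub_zero]
    exact key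
  rw [hRHS]
  constructor
  · -- disjointness implies the argument inequality (contrapositive)
    intro hsets
    by_contra hcon
    push_neg at hcon
    have hmem0 : ∀ p : ℂ, p ∈ convexHull ℝ ({q3, 0, 1} : Set ℂ) →
        p ∈ convexHull ℝ ({q2, v, 0} : Set ℂ) → p = 0 := by
      intro p hp1 hp2
      have hmem := Set.mem_inter hp1 hp2
      rw [hsets] at hmem
      simpa using hmem
    rcases le_or_gt 0 θ with hθ0 | hθ0
    · -- Case A : 0 ≤ θ
      have hq2im : q2.im = R * Real.sin θ := by
        conv_lhs => rw [eq2]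
        exact polar_im R θ
      have hA : ((starRingEnd ℂ) q2 * 1).im ≤ 0 := by
        rw [mul_one, Complex.conj_im, hq2im]
        have h : 0 ≤ Real.sin θ := Real.sin_nonneg_of_nonneg_of_le_pi hθ0 hθπ
        exact neg_nonpos.mpr (mul_nonneg hR0.le h)
      have hB : 0 ≤ ((starRingEnd ℂ) q2 * q3).im := by
        conv_rhs => rw [eq2, eq3]
        rw [polar_mul, polar_im]
        have h : 0 ≤ Real.sin (α - θ) :=
          Real.sin_nonneg_of_nonneg_of_le_pi (by linarith) (by linarith)
        exact mul_nonneg (mul_nonneg hR0.le hR0.le) h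
      have hP : 0 < ((starRingEnd ℂ) (1 : ℂ) * q3).im := by simpa using hα
      obtain ⟨c, hc, hwseg⟩ := seg_dir hq2 hA hB hP
      have hw1 : c • q2 ∈ convexHull ℝ ({q3, 0, 1} : Set ℂ) :=
        segment_subset_convexHull (show (1 : ℂ) ∈ ({q3, 0, 1} : Set ℂ) by simp)
          (show q3 ∈ ({q3, 0, 1} : Set ℂ) by simp) hwseg
      have hwne : c • q2 ≠ 0 := smul_ne_zero (ne_of_gt hc) hq2
      rcases le_or_gt c 1 with hc1 | hc1
      · have hw2 : c • q2 ∈ convexHull ℝ ({q2, v, 0} : Set ℂ) := by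
          apply segment_subset_convexHull
            (show (0 : ℂ) ∈ ({q2, v, 0} : Set ℂ) by simp)
            (show q2 ∈ ({q2, v, 0} : Set ℂ) by simp)
          exact ⟨1 - c, c, by linarith, hc.le, by ring, by simp⟩
        exact hwne (hmem0 _ hw1 hw2)
      · have hmemw : q2 ∈ convexHull ℝ ({q3, 0, 1} : Set ℂ) := by
          have h0 : (0 : ℂ) ∈ convexHull ℝ ({q3, 0, 1} : Set ℂ) :=
            subset_convexHull ℝ _ (by simp)
          apply (convex_convexHull ℝ ({q3, 0, 1} : Set ℂ)).segment_subset h0 hw1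
          have hcinv : c⁻¹ ≤ 1 := by
            rw [← one_div, div_le_one (by linarith)]; linarith
          refine ⟨1 - c⁻¹, c⁻¹, by linarith, inv_nonneg.mpr (by linarith), by ring, ?_⟩
          show (1 - c⁻¹) • (0 : ℂ) + c⁻¹ • (c • q2) = q2
          rw [smul_zero, zero_add, smul_smul, inv_mul_cancel₀ (show c ≠ 0 by linarith), one_smul]
        have hq2mem2 : q2 ∈ convexHull ℝ ({q2, v, 0} : Set ℂ) :=
          subset_convexHull ℝ _ (by simp)
        exact hq2 (hmem0 _ hmemw hq2mem2)
    · -- Case B : θ < 0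
      have hA : ((starRingEnd ℂ) (1 : ℂ) * q2).im ≤ 0 := by
        simp only [map_one, one_mul]
        have hq2im : q2.im = R * Real.sin θ := by
          conv_lhs => rw [eq2]
          exact polar_im R θ
        rw [hq2im]
        have h : Real.sin θ ≤ 0 := by
          have h := Real.sin_nonneg_of_nonneg_of_le_pi (x := -θ) (by linarith) (by linarith)
          rw [Real.sin_neg] at h; linarith
        exact mul_nonpos_iff.mpr (Or.inl ⟨hR0.le, h⟩)
      have hB : 0 ≤ ((starRingEnd ℂ) (1 : ℂ) * v).im := by simpa using hγ.le
      obtain ⟨c, hc, hwseg⟩ := seg_dir one_ne_zero hA hB hβ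
      have hw2 : c • (1 : ℂ) ∈ convexHull ℝ ({q2, v, 0} : Set ℂ) :=
        segment_subset_convexHull (show q2 ∈ ({q2, v, 0} : Set ℂ) by simp)
          (show v ∈ ({q2, v, 0} : Set ℂ) by simp) hwseg
      have hwne : c • (1 : ℂ) ≠ 0 := smul_ne_zero (ne_of_gt hc) one_ne_zero
      rcases le_or_gt c 1 with hc1 | hc1
      · have hw1 : c • (1 : ℂ) ∈ convexHull ℝ ({q3, 0, 1} : Set ℂ) := by
          apply segment_subset_convexHull
            (show (0 : ℂ) ∈ ({q3, 0, 1} : Set ℂ) by simp)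
            (show (1 : ℂ) ∈ ({q3, 0, 1} : Set ℂ) by simp)
          exact ⟨1 - c, c, by linarith, hc.le, by ring, by simp⟩
        exact hwne (hmem0 _ hw1 hw2)
      · have h1mem2 : (1 : ℂ) ∈ convexHull ℝ ({q2, v, 0} : Set ℂ) := by
          have h0 : (0 : ℂ) ∈ convexHull ℝ ({q2, v, 0} : Set ℂ) :=
            subset_convexHull ℝ _ (by simp)
          apply (convex_convexHull ℝ ({q2, v, 0} : Set ℂ)).segment_subset h0 hw2
          have hcinv : c⁻¹ ≤ 1 := by
            rw [← one_div, div_le_one (by linarith)]; linarith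
          refine ⟨1 - c⁻¹, c⁻¹, by linarith, inv_nonneg.mpr (by linarith), by ring, ?_⟩
          show (1 - c⁻¹) • (0 : ℂ) + c⁻¹ • (c • (1 : ℂ)) = 1
          rw [smul_zero, zero_add, smul_smul, inv_mul_cancel₀ (show c ≠ 0 by linarith), one_smul]
        have h1mem1 : (1 : ℂ) ∈ convexHull ℝ ({q3, 0, 1} : Set ℂ) :=
          subset_convexHull ℝ _ (by simp)
        exact one_ne_zero (hmem0 _ h1mem1 h1mem2)
  · -- the argument inequality implies disjointness
    intro hlt
    set T : ℝ := (α + θ) / 2 with hTdef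
    set d : ℂ := ((1 : ℝ) : ℂ) * Complex.exp (((T : ℝ) : ℂ) * Complex.I) with hddef
    set f : ℂ → ℝ := fun z => ((starRingEnd ℂ) d * z).im with hfdef
    have hlin : IsLinearMap ℝ f := by
      constructor
      · intro x y
        show ((starRingEnd ℂ) d * (x + y)).im = _
        rw [mul_add, Complex.add_im]
      · intro r x
        show ((starRingEnd ℂ) d * (r • x)).im = r • ((starRingEnd ℂ) d * x).im
        rw [mul_smul_comm, Complex.smul_im, smul_eq_mul]
    have hf0 : f 0 = 0 := by
      show ((starRingEnd ℂ) d * 0).im = 0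
      simp
    have hf1 : f 1 < 0 := by
      have he : f 1 = (1 * 1) * Real.sin (0 - T) := by
        show ((starRingEnd ℂ) d * 1).im = _
        conv_lhs => rw [show (1 : ℂ) = ((1 : ℝ) : ℂ) *
          Complex.exp (((0 : ℝ) : ℂ) * Complex.I) by simp, hddef]
        rw [polar_mul, polar_im]
      rw [he]
      have h : Real.sin (0 - T) < 0 :=
        Real.sin_neg_of_neg_of_neg_pi_lt (by linarith) (by linarith)
      exact mul_neg_of_pos_of_neg (by norm_num) h
    have hfq3 : f q3 < 0 := by
      have he : f q3 = (1 * R) * Real.sin (α - T) := by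
        show ((starRingEnd ℂ) d * q3).im = _
        conv_lhs => rw [eq3, hddef]
        rw [polar_mul, polar_im]
      rw [he]
      have h : Real.sin (α - T) < 0 :=
        Real.sin_neg_of_neg_of_neg_pi_lt (by linarith) (by linarith)
      exact mul_neg_of_pos_of_neg (by rw [one_mul]; exact hR0) h
    have hfv : 0 < f v := by
      have he : f v = (1 * ρ) * Real.sin (γ - T) := by
        show ((starRingEnd ℂ) d * v).im = _
        conv_lhs => rw [ev, hddef]
        rw [polar_mul, polar_im]
      rw [he]
      have h : 0 < Real.sin (γ - T) :=
        Real.sin_pos_of_pos_of_lt_pi (by linarith) (by linarith)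
      exact mul_pos (by rw [one_mul]; exact hρ0) h
    have hfq2 : 0 < f q2 := by
      have he : f q2 = (1 * R) * Real.sin (θ - T) := by
        show ((starRingEnd ℂ) d * q2).im = _
        conv_lhs => rw [eq2, hddef]
        rw [polar_mul, polar_im]
      rw [he]
      have h : 0 < Real.sin (θ - T) :=
        Real.sin_pos_of_pos_of_lt_pi (by linarith) (by linarith)
      exact mul_pos (by rw [one_mul]; exact hR0) h
    have hsub1 : convexHull ℝ ({q3, 0, 1} : Set ℂ) ⊆ {z | f z ≤ 0} := by
      apply convexHull_min ?_ (convex_halfSpace_le hlin 0)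
      rintro z hz
      simp only [Set.mem_insert_iff, Set.mem_singleton_iff] at hz
      rcases hz with rfl | rfl | rfl
      · exact hfq3.le
      · exact le_of_eq hf0
      · exact hf1.le
    have hsub2 : convexHull ℝ ({q2, v, 0} : Set ℂ) ⊆ {z | 0 ≤ f z} := by
      apply convexHull_min ?_ (convex_halfSpace_ge hlin 0)
      rintro z hz
      simp only [Set.mem_insert_iff, Set.mem_singleton_iff] at hz
      rcases hz with rfl | rfl | rfl
      · exact hfq2.le
      · exact hfv.le
      · exact ge_of_eq hf0
    apply Set.eq_singleton_iff_unique_mem.mpr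
    constructor
    · exact ⟨subset_convexHull ℝ _ (by simp), subset_convexHull ℝ _ (by simp)⟩
    · rintro z ⟨h1, h2⟩
      have hz0 : f z = 0 := le_antisymm (hsub1 h1) (hsub2 h2)
      rw [show ({q3, 0, 1} : Set ℂ) = insert q3 ({0, 1} : Set ℂ) from rfl,
        convexHull_insert ⟨0, by simp⟩, mem_convexJoin] at h1
      obtain ⟨x, hx, y, hy, hseg⟩ := h1
      rw [Set.mem_singleton_iff] at hx
      rw [hx] at hseg
      rw [convexHull_pair] at hy
      obtain ⟨c1, e1', hc1, he1, hce1, hy1⟩ := hy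
      obtain ⟨a1, b1, ha1, hb1, hab1, hz1⟩ := hseg
      have hfz : f z = a1 * f q3 + b1 * (e1' * f 1) := by
        rw [← hz1, ← hy1, hlin.map_add, hlin.map_smul, hlin.map_smul, hlin.map_add,
          hlin.map_smul, hlin.map_smul, hf0]
        simp only [smul_eq_mul]
        ring
      have t1 : a1 * f q3 ≤ 0 := mul_nonpos_iff.mpr (Or.inl ⟨ha1, hfq3.le⟩)
      have t2 : b1 * (e1' * f 1) ≤ 0 :=
        mul_nonpos_iff.mpr (Or.inl ⟨hb1, mul_nonpos_iff.mpr (Or.inl ⟨he1, hf1.le⟩)⟩)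
      have e3 : a1 * f q3 = 0 := by linarith
      have e4 : b1 * (e1' * f 1) = 0 := by linarith
      have ha0 : a1 = 0 := (mul_eq_zero.mp e3).resolve_right (ne_of_lt hfq3)
      have hbe : b1 * e1' = 0 := by
        rcases mul_eq_zero.mp e4 with h | h
        · rw [h, zero_mul]
        · rcases mul_eq_zero.mp h with h' | h'
          · rw [h', mul_zero]
          · exact absurd h' (ne_of_lt hf1)
      rw [← hz1, ← hy1, ha0]
      simp [smul_smul, hbe]
      exact mul_eq_zero.mp hbe

private lemma pos_fac {a b : ℝ} (h : 0 < a * b) (hb : 0 < b) : 0 < a := by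
  rcases mul_pos_iff.mp h with ⟨h1, _⟩ | ⟨_, h2⟩
  · exact h1
  · linarith

private lemma neg_fac {a b : ℝ} (h : 0 < a * b) (hb : b < 0) : a < 0 := by
  rcases mul_pos_iff.mp h with ⟨_, h2⟩ | ⟨h1, _⟩
  · linarith
  · exact h1

set_option maxHeartbeats 1000000 in
private lemma aux2 (u v q2 q3 : ℂ) (hu : u ≠ 0) (hq3 : q3 ≠ 0) (hq2 : q2 ≠ 0) (hv : v ≠ 0)
    (hlen : ‖q3‖ = ‖q2‖)
    (h1 : 0 < ((starRingEnd ℂ) u * q3).im * ((starRingEnd ℂ) u * v).im)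
    (h2 : 0 < ((starRingEnd ℂ) q2 * v).im * ((starRingEnd ℂ) u * v).im)
    (hangle : InnerProductGeometry.angle u q3 + InnerProductGeometry.angle q2 v < π) :
    ((convexHull ℝ ({q3, 0, u} : Set ℂ)) ∩ (convexHull ℝ ({q2, v, 0} : Set ℂ)) = {0}) ↔
      ‖q2 / q3 * u - v‖ < ‖u - v‖ := by
  have hnsq : 0 < Complex.normSq u := Complex.normSq_pos.2 hu
  have habs1 : ‖q2 / q3 * u - v‖ =
      ‖(q2 / u) / (q3 / u) - v / u‖ * ‖u‖ := by
    rw [← norm_mul]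
    congr 1
    field_simp
  have habs2 : ‖u - v‖ = ‖1 - v / u‖ * ‖u‖ := by
    rw [← norm_mul]
    congr 1
    field_simp
  have hβim : ((starRingEnd ℂ) (q2 / u) * (v / u)).im =
      ((starRingEnd ℂ) q2 * v).im / Complex.normSq u := by
    rw [map_div₀, div_mul_div_comm, mul_comm ((starRingEnd ℂ) u) u, Complex.mul_conj,
      Complex.div_ofReal_im]
  rcases lt_or_gt_of_ne (show ((starRingEnd ℂ) u * v).im ≠ 0 by
      intro h; rw [h, mul_zero] at h1; exact lt_irrefl 0 h1) with hs | hs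
  · -- (conj u * v).im < 0 : use the conjugated configuration
    have h3 : ((starRingEnd ℂ) u * q3).im < 0 := neg_fac h1 hs
    have h4 : ((starRingEnd ℂ) q2 * v).im < 0 := neg_fac h2 hs
    have hkey := aux ((starRingEnd ℂ) (v / u)) ((starRingEnd ℂ) (q2 / u))
      ((starRingEnd ℂ) (q3 / u))
      (by simpa using div_ne_zero hq3 hu) (by simpa using div_ne_zero hq2 hu)
      (by simpa using div_ne_zero hv hu)
      (by rw [Complex.norm_conj, Complex.norm_conj, norm_div, norm_div, hlen])
      (by rw [Complex.conj_im, div_im']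
          exact neg_pos.mpr (div_neg_of_neg_of_pos hs hnsq))
      (by rw [Complex.conj_im, div_im']
          exact neg_pos.mpr (div_neg_of_neg_of_pos h3 hnsq))
      (by rw [← map_mul, Complex.conj_im, hβim]
          exact neg_pos.mpr (div_neg_of_neg_of_pos h4 hnsq))
      (by
        have e1 : InnerProductGeometry.angle 1 ((starRingEnd ℂ) (q3 / u)) =
            InnerProductGeometry.angle u q3 := by
          rw [show (1 : ℂ) = (starRingEnd ℂ) 1 by simp,
            angle_conj' 1 (q3 / u) one_ne_zero (div_ne_zero hq3 hu)]
          have h := Complex.angle_mul_left hu 1 (q3 / u)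
          rw [mul_one, show u * (q3 / u) = q3 by field_simp] at h
          exact h.symm
        have e2 : InnerProductGeometry.angle ((starRingEnd ℂ) (q2 / u))
            ((starRingEnd ℂ) (v / u)) = InnerProductGeometry.angle q2 v := by
          rw [angle_conj' (q2 / u) (v / u) (div_ne_zero hq2 hu) (div_ne_zero hv hu)]
          have h := Complex.angle_mul_left hu (q2 / u) (v / u)
          rw [show u * (q2 / u) = q2 by field_simp, show u * (v / u) = v by field_simp] at h
          exact h.symm
        rw [e1, e2]
        exact hangle)
    -- transport along z ↦ u * conj z
    set g : ℂ →ₗ[ℝ] ℂ :=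
      (LinearMap.mulLeft ℝ u).comp Complex.conjLIE.toLinearEquiv.toLinearMap with hgdef
    have hgapp : ∀ z : ℂ, g z = u * (starRingEnd ℂ) z := by
      intro z; simp [hgdef, Complex.conjLIE_apply]
    have hginj : Function.Injective g := by
      intro a b hab
      rw [hgapp, hgapp] at hab
      have := mul_left_cancel₀ hu hab
      simpa using congrArg (starRingEnd ℂ) this
    have himg1 : ({q3, 0, u} : Set ℂ) =
        ⇑(g.toAffineMap) '' {(starRingEnd ℂ) (q3 / u), 0, 1} := by
      rw [Set.image_insert_eq, Set.image_insert_eq, Set.image_singleton]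
      simp only [LinearMap.coe_toAffineMap, hgapp, Complex.conj_conj, map_zero, mul_zero,
        map_one, mul_one]
      rw [show u * (q3 / u) = q3 by field_simp]
    have himg2 : ({q2, v, 0} : Set ℂ) =
        ⇑(g.toAffineMap) '' {(starRingEnd ℂ) (q2 / u), (starRingEnd ℂ) (v / u), 0} := by
      rw [Set.image_insert_eq, Set.image_insert_eq, Set.image_singleton]
      simp only [LinearMap.coe_toAffineMap, hgapp, Complex.conj_conj, map_zero, mul_zero]
      rw [show u * (q2 / u) = q2 by field_simp, show u * (v / u) = v by field_simp]
    rw [himg1, himg2,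
      hull_inter_image g.toAffineMap hginj _ _ 0 0 (by simp [hgapp]), hkey]
    have eabs1 : ‖(starRingEnd ℂ) (q2 / u) / (starRingEnd ℂ) (q3 / u) -
        (starRingEnd ℂ) (v / u)‖ = ‖(q2 / u) / (q3 / u) - v / u‖ := by
      rw [← map_div₀, ← map_sub, Complex.norm_conj]
    have eabs2 : ‖1 - (starRingEnd ℂ) (v / u)‖ =
        ‖1 - v / u‖ := by
      rw [show (1 : ℂ) = (starRingEnd ℂ) 1 by simp, ← map_sub, Complex.norm_conj]
      simp
    rw [eabs1, eabs2, habs1, habs2]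
    exact (mul_lt_mul_iff_left₀ (norm_pos_iff.mpr hu)).symm
  · -- 0 < (conj u * v).im
    have h3 : 0 < ((starRingEnd ℂ) u * q3).im := pos_fac h1 hs
    have h4 : 0 < ((starRingEnd ℂ) q2 * v).im := pos_fac h2 hs
    have hkey := aux (v / u) (q2 / u) (q3 / u)
      (div_ne_zero hq3 hu) (div_ne_zero hq2 hu) (div_ne_zero hv hu)
      (by rw [norm_div, norm_div, hlen])
      (by rw [div_im']; exact div_pos hs hnsq)
      (by rw [div_im']; exact div_pos h3 hnsq)
      (by rw [hβim]; exact div_pos h4 hnsq)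
      (by
        have e1 : InnerProductGeometry.angle 1 (q3 / u) =
            InnerProductGeometry.angle u q3 := by
          have h := Complex.angle_mul_left hu 1 (q3 / u)
          rw [mul_one, show u * (q3 / u) = q3 by field_simp] at h
          exact h.symm
        have e2 : InnerProductGeometry.angle (q2 / u) (v / u) =
            InnerProductGeometry.angle q2 v := by
          have h := Complex.angle_mul_left hu (q2 / u) (v / u)
          rw [show u * (q2 / u) = q2 by field_simp, show u * (v / u) = v by field_simp] at h
          exact h.symm
        rw [e1, e2]
        exact hangle)
    set g : ℂ →ₗ[ℝ] ℂ := LinearMap.mulLeft ℝ u with hgdef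
    have hgapp : ∀ z : ℂ, g z = u * z := by intro z; simp [hgdef]
    have hginj : Function.Injective g := by
      intro a b hab
      rw [hgapp, hgapp] at hab
      exact mul_left_cancel₀ hu hab
    have himg1 : ({q3, 0, u} : Set ℂ) = ⇑(g.toAffineMap) '' {q3 / u, 0, 1} := by
      rw [Set.image_insert_eq, Set.image_insert_eq, Set.image_singleton]
      simp only [LinearMap.coe_toAffineMap, hgapp, mul_zero, mul_one]
      rw [show u * (q3 / u) = q3 by field_simp]
    have himg2 : ({q2, v, 0} : Set ℂ) = ⇑(g.toAffineMap) '' {q2 / u, v / u, 0} := by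
      rw [Set.image_insert_eq, Set.image_insert_eq, Set.image_singleton]
      simp only [LinearMap.coe_toAffineMap, hgapp, mul_zero]
      rw [show u * (q2 / u) = q2 by field_simp, show u * (v / u) = v by field_simp]
    rw [himg1, himg2,
      hull_inter_image g.toAffineMap hginj _ _ 0 0 (by simp [hgapp]), hkey, habs1, habs2]
    exact (mul_lt_mul_iff_left₀ (norm_pos_iff.mpr hu)).symm

end Aux

set_option maxHeartbeats 1000000 in
theorem overlap_lemma_rotation_step (x1 x2 x3 p2 p3 : ℂ)
    (htri : ¬ Collinear ℝ ({x1, x2, x3} : Set ℂ))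
    (hp3 : p3 ≠ x1) (hp2 : p2 ≠ x1)
    (hlen : ‖p3 - x1‖ = ‖p2 - x1‖)
    -- `p3` and `x3` lie strictly on the same side of the line through `x1, x2`
    (hside1 : 0 < ((starRingEnd ℂ) (x2 - x1) * (p3 - x1)).im *
                  ((starRingEnd ℂ) (x2 - x1) * (x3 - x1)).im)
    -- `p2` and `x2` lie strictly on the same side of the line through `x3, x1`
    (hside2 : 0 < ((starRingEnd ℂ) (x1 - x3) * (p2 - x3)).im *
                  ((starRingEnd ℂ) (x1 - x3) * (x2 - x3)).im)
    -- the angle condition ∠(x̃¹; x̃², p̃³) + ∠(x̃¹; p̃², x̃³) < π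
    (hangle : EuclideanGeometry.angle x2 x1 p3 + EuclideanGeometry.angle p2 x1 x3 < π) :
    -- `ẋ²` is the image of `x̃²` under the rotation about `x̃¹` taking ray `x̃¹p̃³` to ray `x̃¹p̃²`
    ((convexHull ℝ ({p3, x1, x2} : Set ℂ)) ∩ (convexHull ℝ ({p2, x3, x1} : Set ℂ)) = {x1}) ↔
      ‖(x1 + ((p2 - x1) / (p3 - x1)) * (x2 - x1)) - x3‖ <
        ‖x2 - x3‖ := by
  set u := x2 - x1 with hudef
  set v := x3 - x1 with hvdef
  set q2 := p2 - x1 with hq2def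
  set q3 := p3 - x1 with hq3def
  have hq3ne : q3 ≠ 0 := sub_ne_zero.mpr hp3
  have hq2ne : q2 ≠ 0 := sub_ne_zero.mpr hp2
  have hu : u ≠ 0 := by
    intro h
    apply htri
    have hx : x2 = x1 := sub_eq_zero.mp (hudef ▸ h)
    rw [hx, Set.insert_idem]
    exact collinear_pair ℝ x1 x3
  have hv : v ≠ 0 := by
    intro h
    apply htri
    have hx : x3 = x1 := sub_eq_zero.mp (hvdef ▸ h)
    rw [hx]
    have hset : ({x1, x2, x1} : Set ℂ) = {x1, x2} := by
      ext z; simp; tauto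
    rw [hset]
    exact collinear_pair ℝ x1 x2
  have hs0 : ((starRingEnd ℂ) u * v).im ≠ 0 := by
    intro h
    apply htri
    have h' : u.re * v.im - u.im * v.re = 0 := by
      simp only [Complex.mul_im, Complex.conj_re, Complex.conj_im] at h
      linarith
    have hnsq' : u.re * u.re + u.im * u.im ≠ 0 := by
      have : Complex.normSq u ≠ 0 := by
        simpa [Complex.normSq_eq_zero] using hu
      simpa [Complex.normSq_apply] using this
    set t : ℝ := (u.re * v.re + u.im * v.im) / (u.re * u.re + u.im * u.im) with htdef
    have hveq : v = (t : ℂ) * u := by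
      apply Complex.ext
      · have : ((t : ℂ) * u).re = t * u.re := by
          simp [Complex.mul_re]
        rw [this, htdef, div_mul_eq_mul_div, eq_div_iff hnsq']
        linear_combination (-u.im) * h'
      · have : ((t : ℂ) * u).im = t * u.im := by
          simp [Complex.mul_im]
        rw [this, htdef, div_mul_eq_mul_div, eq_div_iff hnsq']
        linear_combination u.re * h'
    refine (collinear_iff_of_mem (Set.mem_insert x1 _)).mpr ⟨u, ?_⟩
    intro p hp
    simp only [Set.mem_insert_iff, Set.mem_singleton_iff] at hp
    rcases hp with rfl | rfl | rfl
    · exact ⟨0, by simp⟩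
    · refine ⟨1, ?_⟩
      rw [one_smul, vadd_eq_add, hudef]
      ring
    · refine ⟨t, ?_⟩
      rw [vadd_eq_add, Complex.real_smul, ← hveq, hvdef]
      ring
  have e2a : ((starRingEnd ℂ) (x1 - x3) * (p2 - x3)).im = ((starRingEnd ℂ) q2 * v).im := by
    simp only [hq2def, hvdef, Complex.mul_im, Complex.conj_re, Complex.conj_im,
      Complex.sub_re, Complex.sub_im]
    ring
  have e2b : ((starRingEnd ℂ) (x1 - x3) * (x2 - x3)).im = ((starRingEnd ℂ) u * v).im := by
    simp only [hudef, hvdef, Complex.mul_im, Complex.conj_re, Complex.conj_im,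
      Complex.sub_re, Complex.sub_im]
    ring
  rw [e2a, e2b] at hside2
  have hangle' : InnerProductGeometry.angle u q3 + InnerProductGeometry.angle q2 v < π := by
    have h1 : EuclideanGeometry.angle x2 x1 p3 = InnerProductGeometry.angle u q3 := rfl
    have h2 : EuclideanGeometry.angle p2 x1 x3 = InnerProductGeometry.angle q2 v := by
      rw [EuclideanGeometry.angle, vsub_eq_sub, vsub_eq_sub,
        InnerProductGeometry.angle_comm]
    rw [h1, h2] at hangle
    exact hangle
  have hkey := aux2 u v q2 q3 hu hq3ne hq2ne hv hlen hside1 hside2 hangle'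
  -- transport along the translation z ↦ x1 + z
  set f : ℂ →ᵃ[ℝ] ℂ := (AffineEquiv.constVAdd ℝ ℂ x1).toAffineMap with hfdef
  have hfapp : ∀ z : ℂ, f z = x1 + z := by
    intro z
    simp [hfdef]
  have hfinj : Function.Injective f := by
    intro a b hab
    rw [hfapp, hfapp] at hab
    exact add_left_cancel hab
  have himg1 : ({p3, x1, x2} : Set ℂ) = ⇑f '' {q3, 0, u} := by
    rw [Set.image_insert_eq, Set.image_insert_eq, Set.image_singleton, hfapp, hfapp, hfapp]
    rw [hq3def, hudef]
    norm_num
  have himg2 : ({p2, x3, x1} : Set ℂ) = ⇑f '' {q2, v, 0} := by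
    rw [Set.image_insert_eq, Set.image_insert_eq, Set.image_singleton, hfapp, hfapp, hfapp]
    rw [hq2def, hvdef]
    norm_num
  rw [himg1, himg2, hull_inter_image f hfinj _ _ 0 x1 (by rw [hfapp]; ring), hkey]
  have ea : x1 + q2 / q3 * u - x3 = q2 / q3 * u - v := by
    rw [hvdef]; ring
  have eb : x2 - x3 = u - v := by
    rw [hudef, hvdef]; ring
  rw [ea, eb]
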